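/- Let T ∈ ℕ with T ≥ 1, r > 0, α₀ ∈ ℝ, and (t,x) ∈ ℤ² with sin(η₁) ≠ 0. With β₀ replaced by the purely imaginary value i·β̂₀ (β̂₀ ∈ ℝ) in the definitions of ζ_j, η_j (so that ζ_j, η_j for j = 2,…,5 are complex), the limit lim_{β̂₀→+∞} ∏_{j=1}^{5} [sin(ζ_j)/sin(η_j)] = sin(ζ₁)/sin(η₁) holds, where sin denotes the complex sine. Explicitly, sin(ζ₁)/sin(η₁) = sin((2α₀ − (3T+1) + (3t−x))/(2r)) / sin((2α₀ − (3T+1) + (t+x))/(2r)). -/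

import Mathlib

open scoped Real
open Filter

/-- The numerator arguments `ζ₁, …, ζ₅` with `β₀` replaced by the purely
imaginary value `i·β̂₀`. -/
noncomputable def zetaArgC (T : ℕ) (r α₀ : ℝ) (b : ℝ) (t x : ℤ) : Fin 5 → ℂ :=
  ![(((2 * α₀ - (3 * (T : ℝ) + 1) + (3 * (t : ℝ) - (x : ℝ))) / (2 * r) : ℝ) : ℂ),
    (2 * (Complex.I * (b : ℂ)) - (3 * (T : ℂ) + 1) + 2 * ((t : ℂ) + (x : ℂ))) / (2 * (r : ℂ)),
    (2 * (Complex.I * (b : ℂ)) - (3 * (T : ℂ) + 1) + 2 * ((t : ℂ) + (x : ℂ))) / (2 * (r : ℂ))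
      - 1 / (r : ℂ),
    (2 * ((α₀ : ℂ) - Complex.I * (b : ℂ)) - ((t : ℂ) + (x : ℂ))) / (2 * (r : ℂ)),
    (2 * ((α₀ : ℂ) - Complex.I * (b : ℂ)) - ((t : ℂ) + (x : ℂ))) / (2 * (r : ℂ)) + 1 / (r : ℂ)]

/-- The denominator arguments `η₁, …, η₅` with `β₀` replaced by the purely
imaginary value `i·β̂₀`. -/
noncomputable def etaArgC (T : ℕ) (r α₀ : ℝ) (b : ℝ) (t x : ℤ) : Fin 5 → ℂ :=
  ![(((2 * α₀ - (3 * (T : ℝ) + 1) + ((t : ℝ) + (x : ℝ))) / (2 * r) : ℝ) : ℂ),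
    (2 * (Complex.I * (b : ℂ)) - (3 * (T : ℂ) + 1) + (3 * (t : ℂ) + (x : ℂ))) / (2 * (r : ℂ)),
    (2 * (Complex.I * (b : ℂ)) - (3 * (T : ℂ) + 1) + (3 * (t : ℂ) + (x : ℂ))) / (2 * (r : ℂ))
      - 1 / (r : ℂ),
    ((α₀ : ℂ) - Complex.I * (b : ℂ) - (x : ℂ)) / (r : ℂ),
    ((α₀ : ℂ) - Complex.I * (b : ℂ) - (x : ℂ)) / (r : ℂ) + 1 / (r : ℂ)]

lemma expZero (a c : ℝ) (ha : a < 0) :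
    Tendsto (fun b : ℝ => Complex.exp (((a * b : ℝ) : ℂ) + Complex.I * (c : ℝ))) atTop (nhds 0) := by
  rw [tendsto_zero_iff_norm_tendsto_zero]
  have h1 : ∀ b : ℝ, ‖Complex.exp (((a * b : ℝ) : ℂ) + Complex.I * (c : ℝ))‖
      = Real.exp (a * b) := by
    intro b
    rw [Complex.norm_exp]
    simp
  simp only [h1]
  exact Real.tendsto_exp_atBot.comp (tendsto_id.const_mul_atTop_of_neg ha)

lemma sin_ratio_key (u v : ℂ) :
    Complex.sin u / Complex.sin v = Complex.exp (-(Complex.I * (u - v))) *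
      ((1 - Complex.exp (2 * Complex.I * u)) / (1 - Complex.exp (2 * Complex.I * v))) := by
  have hu : Complex.exp (u * Complex.I) = Complex.exp (-u * Complex.I) *
      Complex.exp (2 * Complex.I * u) := by rw [← Complex.exp_add]; ring_nf
  have hv : Complex.exp (v * Complex.I) = Complex.exp (-v * Complex.I) *
      Complex.exp (2 * Complex.I * v) := by rw [← Complex.exp_add]; ring_nf
  have h1 : Complex.sin u / Complex.sin v =
      (Complex.exp (-u * Complex.I) * (1 - Complex.exp (2 * Complex.I * u)) * (Complex.I / 2)) /
      (Complex.exp (-v * Complex.I) * (1 - Complex.exp (2 * Complex.I * v)) * (Complex.I / 2)) := by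
    rw [Complex.sin, Complex.sin, hu, hv]; congr 1 <;> ring
  rw [h1, mul_div_mul_right _ _ (by norm_num [Complex.I_ne_zero] : (Complex.I / 2 : ℂ) ≠ 0),
    mul_div_mul_comm, ← Complex.exp_sub]
  congr 2
  ring

lemma sin_ratio (z w : ℝ → ℂ) (d : ℂ) (hd : ∀ b, z b - w b = d)
    (hz : Tendsto (fun b => Complex.exp (2 * Complex.I * z b)) atTop (nhds 0))
    (hw : Tendsto (fun b => Complex.exp (2 * Complex.I * w b)) atTop (nhds 0)) :
    Tendsto (fun b => Complex.sin (z b) / Complex.sin (w b)) atTop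
      (nhds (Complex.exp (-(Complex.I * d)))) := by
  have heq : (fun b => Complex.sin (z b) / Complex.sin (w b)) =
      fun b => Complex.exp (-(Complex.I * d)) *
        ((1 - Complex.exp (2 * Complex.I * z b)) / (1 - Complex.exp (2 * Complex.I * w b))) := by
    funext b; rw [sin_ratio_key, hd]
  rw [heq]
  have hdiv : Tendsto (fun b => (1 - Complex.exp (2 * Complex.I * z b)) /
      (1 - Complex.exp (2 * Complex.I * w b))) atTop (nhds ((1 - 0) / (1 - 0))) :=
    (tendsto_const_nhds.sub hz).div (tendsto_const_nhds.sub hw) (by norm_num)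
  have hmul := (tendsto_const_nhds (x := Complex.exp (-(Complex.I * d)))).mul hdiv
  simpa using hmul

lemma sin_ratio_neg (z w : ℝ → ℂ) (d : ℂ) (hd : ∀ b, z b - w b = d)
    (hz : Tendsto (fun b => Complex.exp (2 * Complex.I * (-z b))) atTop (nhds 0))
    (hw : Tendsto (fun b => Complex.exp (2 * Complex.I * (-w b))) atTop (nhds 0)) :
    Tendsto (fun b => Complex.sin (z b) / Complex.sin (w b)) atTop
      (nhds (Complex.exp (Complex.I * d))) := by
  have := sin_ratio (fun b => -z b) (fun b => -w b) (-d) (fun b => by rw [← hd b]; ring) hz hw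
  simp only [Complex.sin_neg, neg_div_neg_eq, mul_neg, neg_neg] at this
  exact this

lemma exp_eq_tendsto {f : ℝ → ℂ} (a c : ℝ) (ha : a < 0)
    (hf : ∀ b : ℝ, f b = ((a * b : ℝ) : ℂ) + Complex.I * (c : ℝ)) :
    Tendsto (fun b => Complex.exp (f b)) atTop (nhds 0) := by
  have h : (fun b => Complex.exp (f b)) =
      fun b => Complex.exp (((a * b : ℝ) : ℂ) + Complex.I * (c : ℝ)) :=
    funext fun b => by rw [hf]
  rw [h]; exact expZero a c ha

set_option maxHeartbeats 2000000 in
/-- The reduction from the trigonometric to the simplified trigonometric elementary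
weight: `q̃(t,x) = lim_{β̂₀→∞} q̂(t,x; r, α₀, iβ̂₀)`, explicitly
`q̃(t,x) = sin((2α₀ − (3T+1) + (3t−x))/(2r)) / sin((2α₀ − (3T+1) + (t+x))/(2r))`. -/
theorem trig_weight_simplified_limit (T : ℕ) (hT : 1 ≤ T) (r α₀ : ℝ) (hr : 0 < r)
    (t x : ℤ)
    (hne : Real.sin ((2 * α₀ - (3 * (T : ℝ) + 1) + ((t : ℝ) + (x : ℝ))) / (2 * r)) ≠ 0) :
    Tendsto (fun b : ℝ => ∏ j : Fin 5,
        Complex.sin (zetaArgC T r α₀ b t x j) / Complex.sin (etaArgC T r α₀ b t x j))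
      atTop
      (nhds (((Real.sin ((2 * α₀ - (3 * (T : ℝ) + 1) + (3 * (t : ℝ) - (x : ℝ))) / (2 * r)) /
        Real.sin ((2 * α₀ - (3 * (T : ℝ) + 1) + ((t : ℝ) + (x : ℝ))) / (2 * r)) : ℝ) : ℂ))) := by
  have hrne : (r : ℝ) ≠ 0 := hr.ne'
  have hrC : (r : ℂ) ≠ 0 := by exact_mod_cast hrne
  have haneg : (-2 / r : ℝ) < 0 := div_neg_of_neg_of_pos (by norm_num) hr
  have hdd : True := trivial
  set d : ℂ := ((x : ℂ) - (t : ℂ)) / (2 * (r : ℂ)) with hd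
  -- j = 1
  have h1 : Tendsto (fun b : ℝ => Complex.sin
      ((2 * (Complex.I * (b : ℂ)) - (3 * (T : ℂ) + 1) + 2 * ((t : ℂ) + (x : ℂ))) / (2 * (r : ℂ))) /
      Complex.sin
      ((2 * (Complex.I * (b : ℂ)) - (3 * (T : ℂ) + 1) + (3 * (t : ℂ) + (x : ℂ))) / (2 * (r : ℂ))))
      atTop (nhds (Complex.exp (-(Complex.I * d)))) := by
    refine sin_ratio _ _ d (fun b => by rw [hd]; field_simp; ring) ?_ ?_
    · exact exp_eq_tendsto (-2 / r) ((-(3 * (T : ℝ) + 1) + 2 * ((t : ℝ) + (x : ℝ))) / r) haneg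
        (fun b => by push_cast; field_simp; ring_nf; rw [Complex.I_sq]; ring)
    · exact exp_eq_tendsto (-2 / r) ((-(3 * (T : ℝ) + 1) + (3 * (t : ℝ) + (x : ℝ))) / r) haneg
        (fun b => by push_cast; field_simp; ring_nf; rw [Complex.I_sq]; ring)
  -- j = 2
  have h2 : Tendsto (fun b : ℝ => Complex.sin
      ((2 * (Complex.I * (b : ℂ)) - (3 * (T : ℂ) + 1) + 2 * ((t : ℂ) + (x : ℂ))) / (2 * (r : ℂ))
        - 1 / (r : ℂ)) /
      Complex.sin
      ((2 * (Complex.I * (b : ℂ)) - (3 * (T : ℂ) + 1) + (3 * (t : ℂ) + (x : ℂ))) / (2 * (r : ℂ))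
        - 1 / (r : ℂ)))
      atTop (nhds (Complex.exp (-(Complex.I * d)))) := by
    refine sin_ratio _ _ d (fun b => by rw [hd]; field_simp; ring) ?_ ?_
    · exact exp_eq_tendsto (-2 / r) ((-(3 * (T : ℝ) + 1) + 2 * ((t : ℝ) + (x : ℝ))) / r - 2 / r)
        haneg (fun b => by push_cast; field_simp; ring_nf; rw [Complex.I_sq]; ring)
    · exact exp_eq_tendsto (-2 / r) ((-(3 * (T : ℝ) + 1) + (3 * (t : ℝ) + (x : ℝ))) / r - 2 / r)
        haneg (fun b => by push_cast; field_simp; ring_nf; rw [Complex.I_sq]; ring)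
  -- j = 3
  have h3 : Tendsto (fun b : ℝ => Complex.sin
      ((2 * ((α₀ : ℂ) - Complex.I * (b : ℂ)) - ((t : ℂ) + (x : ℂ))) / (2 * (r : ℂ))) /
      Complex.sin (((α₀ : ℂ) - Complex.I * (b : ℂ) - (x : ℂ)) / (r : ℂ)))
      atTop (nhds (Complex.exp (Complex.I * d))) := by
    refine sin_ratio_neg _ _ d (fun b => by rw [hd]; field_simp; ring) ?_ ?_
    · exact exp_eq_tendsto (-2 / r) ((-2 * α₀ + ((t : ℝ) + (x : ℝ))) / r) haneg
        (fun b => by push_cast; field_simp; ring_nf; rw [Complex.I_sq]; ring)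
    · exact exp_eq_tendsto (-2 / r) ((-2 * α₀ + 2 * (x : ℝ)) / r) haneg
        (fun b => by push_cast; field_simp; ring_nf; rw [Complex.I_sq]; ring)
  -- j = 4
  have h4 : Tendsto (fun b : ℝ => Complex.sin
      ((2 * ((α₀ : ℂ) - Complex.I * (b : ℂ)) - ((t : ℂ) + (x : ℂ))) / (2 * (r : ℂ)) + 1 / (r : ℂ)) /
      Complex.sin (((α₀ : ℂ) - Complex.I * (b : ℂ) - (x : ℂ)) / (r : ℂ) + 1 / (r : ℂ)))
      atTop (nhds (Complex.exp (Complex.I * d))) := by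
    refine sin_ratio_neg _ _ d (fun b => by rw [hd]; field_simp; ring) ?_ ?_
    · exact exp_eq_tendsto (-2 / r) ((-2 * α₀ + ((t : ℝ) + (x : ℝ))) / r - 2 / r) haneg
        (fun b => by push_cast; field_simp; ring_nf; rw [Complex.I_sq]; ring)
    · exact exp_eq_tendsto (-2 / r) ((-2 * α₀ + 2 * (x : ℝ)) / r - 2 / r) haneg
        (fun b => by push_cast; field_simp; ring_nf; rw [Complex.I_sq]; ring)
  have C0def : ∃ C0 : ℂ, C0 = Complex.sin
      (((2 * α₀ - (3 * (T : ℝ) + 1) + (3 * (t : ℝ) - (x : ℝ))) / (2 * r) : ℝ) : ℂ) /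
      Complex.sin (((2 * α₀ - (3 * (T : ℝ) + 1) + ((t : ℝ) + (x : ℝ))) / (2 * r) : ℝ) : ℂ) :=
    ⟨_, rfl⟩
  obtain ⟨C0, hC0⟩ := C0def
  have H := ((((tendsto_const_nhds : Tendsto (fun _ : ℝ => C0) atTop (nhds C0)).mul h1).mul h2).mul h3).mul h4
  have hone : Complex.exp (-(Complex.I * d)) * Complex.exp (Complex.I * d) = 1 := by
    rw [← Complex.exp_add, neg_add_cancel, Complex.exp_zero]
  have hval : ((Real.sin ((2 * α₀ - (3 * (T : ℝ) + 1) + (3 * (t : ℝ) - (x : ℝ))) / (2 * r)) /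
        Real.sin ((2 * α₀ - (3 * (T : ℝ) + 1) + ((t : ℝ) + (x : ℝ))) / (2 * r)) : ℝ) : ℂ)
      = C0 * Complex.exp (-(Complex.I * d)) * Complex.exp (-(Complex.I * d)) *
        Complex.exp (Complex.I * d) * Complex.exp (Complex.I * d) := by
    have h5 : C0 * Complex.exp (-(Complex.I * d)) * Complex.exp (-(Complex.I * d)) *
        Complex.exp (Complex.I * d) * Complex.exp (Complex.I * d)
        = C0 * (Complex.exp (-(Complex.I * d)) * Complex.exp (Complex.I * d)) *
          (Complex.exp (-(Complex.I * d)) * Complex.exp (Complex.I * d)) := by ring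
    rw [h5, hone, mul_one, mul_one, hC0]
    push_cast [Complex.ofReal_sin]
    ring
  rw [hval]
  have hfun : (fun b : ℝ => ∏ j : Fin 5,
      Complex.sin (zetaArgC T r α₀ b t x j) / Complex.sin (etaArgC T r α₀ b t x j)) =
      fun b : ℝ => C0 *
        (Complex.sin ((2 * (Complex.I * (b : ℂ)) - (3 * (T : ℂ) + 1) + 2 * ((t : ℂ) + (x : ℂ))) / (2 * (r : ℂ))) /
         Complex.sin ((2 * (Complex.I * (b : ℂ)) - (3 * (T : ℂ) + 1) + (3 * (t : ℂ) + (x : ℂ))) / (2 * (r : ℂ)))) *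
        (Complex.sin ((2 * (Complex.I * (b : ℂ)) - (3 * (T : ℂ) + 1) + 2 * ((t : ℂ) + (x : ℂ))) / (2 * (r : ℂ)) - 1 / (r : ℂ)) /
         Complex.sin ((2 * (Complex.I * (b : ℂ)) - (3 * (T : ℂ) + 1) + (3 * (t : ℂ) + (x : ℂ))) / (2 * (r : ℂ)) - 1 / (r : ℂ))) *
        (Complex.sin ((2 * ((α₀ : ℂ) - Complex.I * (b : ℂ)) - ((t : ℂ) + (x : ℂ))) / (2 * (r : ℂ))) /
         Complex.sin (((α₀ : ℂ) - Complex.I * (b : ℂ) - (x : ℂ)) / (r : ℂ))) *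
        (Complex.sin ((2 * ((α₀ : ℂ) - Complex.I * (b : ℂ)) - ((t : ℂ) + (x : ℂ))) / (2 * (r : ℂ)) + 1 / (r : ℂ)) /
         Complex.sin (((α₀ : ℂ) - Complex.I * (b : ℂ) - (x : ℂ)) / (r : ℂ) + 1 / (r : ℂ))) := by
    funext b
    rw [Fin.prod_univ_five, hC0]
    rfl
  rw [hfun]
  exact H
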